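/- Let n be a nonempty finite type, 0 < α < 1, A an n×n real matrix, and x₀ ∈ ℝ^n. If x : ℝ → ℝ^n is continuous on [0, ∞) and satisfies for every t ≥ 0 the Volterra integral equation x(t) = x₀ + (Γ(α))⁻¹ • ∫_0^t (t−s)^{α−1} • (A · x(s)) ds, then x(t) = E_α(t^α • A) · x₀ for all t ≥ 0; i.e., the solution of the fractional initial value problem is unique. -/

import Mathlib

open Real MeasureTheory intervalIntegral Set


open Real MeasureTheory intervalIntegral Set

lemma gamma_factorial_lb {x : ℝ} (hx : 0 ≤ x) :
    (Nat.floor x).factorial ≤ 6 * Real.Gamma (x + 1) := by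
  rcases lt_or_ge x 1 with h1 | h1
  · have hfl : Nat.floor x = 0 := Nat.floor_eq_zero.2 h1
    rw [hfl]
    have h3 : Real.Gamma (x + 3) = (x + 2) * ((x + 1) * Real.Gamma (x + 1)) := by
      have e1 : x + 3 = (x + 2) + 1 := by ring
      have e2 : x + 2 = (x + 1) + 1 := by ring
      rw [e1, Real.Gamma_add_one (by positivity), e2, Real.Gamma_add_one (by positivity)]
    have hmono := Real.Gamma_strictMonoOn_Ici.monotoneOn (a := 2) (b := x + 3)
      (by simp [Set.mem_Ici]) (by simp [Set.mem_Ici]; linarith) (by linarith)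
    rw [Real.Gamma_two] at hmono
    have hb : 1 ≤ (x + 2) * ((x + 1) * Real.Gamma (x + 1)) := h3 ▸ hmono
    have h6 : (x + 2) * (x + 1) ≤ 6 := by nlinarith
    have hg : 0 < Real.Gamma (x + 1) := Real.Gamma_pos_of_pos (by positivity)
    simp only [Nat.factorial_zero, Nat.cast_one]
    nlinarith
  · have hfl1 : 1 ≤ Nat.floor x := (Nat.one_le_floor_iff x).2 h1
    have hle : ((Nat.floor x : ℝ)) + 1 ≤ x + 1 := by
      have := Nat.floor_le (by linarith : (0:ℝ) ≤ x); linarith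
    have hmono := Real.Gamma_strictMonoOn_Ici.monotoneOn (a := (Nat.floor x : ℝ) + 1)
      (b := x + 1) (by simp only [Set.mem_Ici]; push_cast; exact_mod_cast Nat.succ_le_succ hfl1) (by
        simp [Set.mem_Ici]; linarith) hle
    rw [Real.Gamma_nat_eq_factorial] at hmono
    have hg : 0 < Real.Gamma (x + 1) := Real.Gamma_pos_of_pos (by positivity)
    nlinarith

set_option maxHeartbeats 1000000 in
lemma ml_summable {α : ℝ} (hα : 0 < α) {r : ℝ} (hr : 0 ≤ r) :
    Summable (fun k : ℕ => r ^ k / Real.Gamma (α * k + 1)) := by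
  set ε : ℝ := min (1/2) ((1/(r+1)) ^ (1/α)) with hε
  have hε0 : 0 < ε := lt_min (by norm_num) (Real.rpow_pos_of_pos (by positivity) _)
  have hε1 : ε ≤ 1/2 := min_le_left _ _
  have hεα : ε ^ α ≤ 1/(r+1) := by
    calc ε ^ α ≤ ((1/(r+1)) ^ (1/α)) ^ α :=
          Real.rpow_le_rpow hε0.le (min_le_right _ _) hα.le
    _ = 1/(r+1) := by
          rw [← Real.rpow_mul (by positivity), one_div_mul_cancel hα.ne', Real.rpow_one]
  set C : ℝ := ∑' m : ℕ, (ε⁻¹) ^ m / m.factorial with hC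
  have hsum : Summable (fun m : ℕ => (ε⁻¹) ^ m / m.factorial) :=
    Real.summable_pow_div_factorial ε⁻¹
  have hCle : ∀ m : ℕ, 1 / m.factorial ≤ C * ε ^ m := by
    intro m
    have h1 : (ε⁻¹) ^ m / m.factorial ≤ C := Summable.le_tsum hsum m (fun j _ => by positivity)
    have h2 : (0:ℝ) < ε ^ m := by positivity
    have := mul_le_mul_of_nonneg_right h1 h2.le
    rw [div_mul_eq_mul_div, ← mul_pow, inv_mul_cancel₀ hε0.ne', one_pow] at this
    linarith
  have hC0 : 0 < C := by have := hCle 0; simp at this; linarith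
  set ρ : ℝ := r * ε ^ α with hρ
  have hρ0 : 0 ≤ ρ := by positivity
  have hρ1 : ρ < 1 := by
    have : ρ ≤ r * (1/(r+1)) := by
      apply mul_le_mul_of_nonneg_left hεα hr
    have hlt : r * (1/(r+1)) < 1 := by
      rw [mul_one_div, div_lt_one (by positivity)]; linarith
    linarith
  refine Summable.of_nonneg_of_le (fun k => by positivity) (fun k => ?_)
    ((summable_geometric_of_lt_one hρ0 hρ1).mul_left (6 * C / ε))
  · 
    have hx : (0:ℝ) ≤ α * k := by positivity
    have hgb := gamma_factorial_lb hx
    have hgpos : 0 < Real.Gamma (α * k + 1) := Real.Gamma_pos_of_pos (by positivity)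
    have hfac : (0:ℝ) < (Nat.floor (α * k)).factorial := by positivity
    have h1 : 1 / Real.Gamma (α * k + 1) ≤ 6 / (Nat.floor (α * k)).factorial := by
      rw [div_le_div_iff₀ hgpos hfac]
      linarith
    have h2 : 1 / ((Nat.floor (α * k)).factorial : ℝ) ≤ C * ε ^ (Nat.floor (α * k)) :=
      hCle _
    have h3 : (ε : ℝ) ^ (Nat.floor (α * k)) ≤ ε ^ (α * k - 1) := by
      rw [← Real.rpow_natCast ε (Nat.floor (α * k))]
      apply Real.rpow_le_rpow_of_exponent_ge hε0 (by linarith)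
      exact (Nat.sub_one_lt_floor (α * k)).le
    have h4 : ε ^ (α * k - 1) = (ε ^ α) ^ k / ε := by
      rw [Real.rpow_sub hε0, Real.rpow_one, ← Real.rpow_natCast (ε ^ α) k,
        ← Real.rpow_mul hε0.le]
    have hrk : (0:ℝ) ≤ r ^ k := by positivity
    calc r ^ k / Real.Gamma (α * k + 1) = r ^ k * (1 / Real.Gamma (α * k + 1)) := by ring
    _ ≤ r ^ k * (6 / (Nat.floor (α * k)).factorial) := by
        apply mul_le_mul_of_nonneg_left h1 hrk
    _ = 6 * r ^ k * (1 / (Nat.floor (α * k)).factorial) := by ring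
    _ ≤ 6 * r ^ k * (C * ε ^ (Nat.floor (α * k))) := by
        apply mul_le_mul_of_nonneg_left h2 (by positivity)
    _ ≤ 6 * r ^ k * (C * ((ε ^ α) ^ k / ε)) := by
        apply mul_le_mul_of_nonneg_left _ (by positivity)
        apply mul_le_mul_of_nonneg_left _ hC0.le
        rw [← h4]; exact h3
    _ = (6 * C / ε) * (r ^ k * (ε ^ α) ^ k) := by ring
    _ = (6 * C / ε) * ρ ^ k := by rw [← mul_pow]

lemma real_beta {a b : ℝ} (ha : 0 < a) (hb : 0 < b) :
    ∫ s in (0:ℝ)..1, s ^ (a - 1) * (1 - s) ^ (b - 1) =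
      Real.Gamma a * Real.Gamma b / Real.Gamma (a + b) := by
  have key := Complex.Gamma_mul_Gamma_eq_betaIntegral (s := (a:ℂ)) (t := (b:ℂ))
    (by simpa using ha) (by simpa using hb)
  have hbeta : Complex.betaIntegral a b =
      ((∫ s in (0:ℝ)..1, s ^ (a - 1) * (1 - s) ^ (b - 1) : ℝ) : ℂ) := by
    rw [Complex.betaIntegral]
    rw [← intervalIntegral.integral_ofReal]
    apply intervalIntegral.integral_congr
    intro s hs
    rw [Set.uIcc_of_le (by norm_num : (0:ℝ) ≤ 1)] at hs
    have e1 : ((a:ℂ) - 1) = ((a - 1 : ℝ) : ℂ) := by push_cast; ring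
    have e2 : ((b:ℂ) - 1) = ((b - 1 : ℝ) : ℂ) := by push_cast; ring
    have e3 : ((1:ℂ) - (s:ℂ)) = ((1 - s : ℝ) : ℂ) := by push_cast; ring
    show (s:ℂ) ^ ((a:ℂ) - 1) * ((1:ℂ) - (s:ℂ)) ^ ((b:ℂ) - 1) = _
    rw [e1, e2, e3, ← Complex.ofReal_cpow hs.1,
      ← Complex.ofReal_cpow (by linarith [hs.2] : (0:ℝ) ≤ 1 - s), ← Complex.ofReal_mul]
  rw [hbeta] at key
  have hgab : Complex.Gamma ((a:ℂ) + (b:ℂ)) = (Real.Gamma (a + b) : ℂ) := by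
    rw [← Complex.ofReal_add, Complex.Gamma_ofReal]
  rw [Complex.Gamma_ofReal, Complex.Gamma_ofReal, hgab] at key
  have : ((Real.Gamma a * Real.Gamma b : ℝ) : ℂ) =
      ((Real.Gamma (a + b) * ∫ s in (0:ℝ)..1, s ^ (a - 1) * (1 - s) ^ (b - 1) : ℝ) : ℂ) := by
    push_cast; exact key
  have hr := Complex.ofReal_injective this
  have hne : Real.Gamma (a + b) ≠ 0 := (Real.Gamma_pos_of_pos (by linarith)).ne'
  field_simp
  linarith [hr]

lemma integrable_kernel {a b t : ℝ} (ha : 0 < a) (hb : 0 ≤ b) (ht : 0 ≤ t) :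
    IntervalIntegrable (fun s => (t - s) ^ (a - 1) * s ^ b) volume 0 t := by
  have h1 : IntervalIntegrable (fun s : ℝ => (t - s) ^ (a - 1)) volume 0 t := by
    have := (intervalIntegrable_rpow' (a := 0) (b := t) (by linarith : (-1:ℝ) < a - 1))
    have h2 := this.comp_sub_left t
    simpa using h2.symm
  apply h1.mul_continuousOn
  rw [Set.uIcc_of_le ht]
  rcases eq_or_lt_of_le hb with hb0 | hb0
  · simp [← hb0]
    exact continuousOn_const
  · intro s hs
    exact (Real.continuousAt_rpow_const s b (Or.inr hb0.le)).continuousWithinAt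

lemma beta_conv {a b t : ℝ} (ha : 0 < a) (hb1 : 1 ≤ b) (ht : 0 ≤ t) :
    ∫ s in (0:ℝ)..t, (t - s) ^ (a - 1) * s ^ (b - 1) =
      (Real.Gamma a * Real.Gamma b / Real.Gamma (a + b)) * t ^ (a + b - 1) := by
  have hb : (0:ℝ) < b := by linarith
  rcases eq_or_lt_of_le ht with ht0 | ht0
  · rw [← ht0]
    rw [intervalIntegral.integral_same, Real.zero_rpow (by linarith : a + b - 1 ≠ 0)]
    ring
  · have key := intervalIntegral.integral_comp_mul_left
      (f := fun s => (t - s) ^ (a - 1) * s ^ (b - 1)) (a := 0) (b := 1) (c := t) ht0.ne'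
    simp only [mul_zero, mul_one] at key
    have congr1 : ∫ u in (0:ℝ)..1, (t - t * u) ^ (a - 1) * (t * u) ^ (b - 1) =
        ∫ u in (0:ℝ)..1, (t ^ (a - 1) * t ^ (b - 1)) * (u ^ (b - 1) * (1 - u) ^ (a - 1)) := by
      apply intervalIntegral.integral_congr
      intro u hu
      rw [Set.uIcc_of_le (by norm_num : (0:ℝ) ≤ 1)] at hu
      have h1u : (0:ℝ) ≤ 1 - u := by linarith [hu.2]
      have e1 : t - t * u = t * (1 - u) := by ring
      simp only [e1, Real.mul_rpow ht h1u, Real.mul_rpow ht hu.1]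
      ring
    rw [congr1, intervalIntegral.integral_const_mul, real_beta hb ha] at key
    have : (∫ s in (0:ℝ)..t, (t - s) ^ (a - 1) * s ^ (b - 1)) =
        t * (t ^ (a - 1) * t ^ (b - 1) * (Real.Gamma b * Real.Gamma a / Real.Gamma (b + a))) := by
      rw [key]
      rw [smul_eq_mul, ← mul_assoc, mul_inv_cancel₀ ht0.ne', one_mul]
    rw [this]
    have et : t * (t ^ (a - 1) * t ^ (b - 1)) = t ^ (a + b - 1) := by
      have h1 : t ^ (a - 1) * t ^ (b - 1) = t ^ (a + b - 2) := by
        rw [← Real.rpow_add ht0]; congr 1; ring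
      have h2 : t * t ^ (a + b - 2) = t ^ (a + b - 1) := by
        nth_rewrite 1 [← Real.rpow_one t]
        rw [← Real.rpow_add ht0]; congr 1; ring
      rw [h1, h2]
    rw [add_comm b a]
    calc t * (t ^ (a - 1) * t ^ (b - 1) * (Real.Gamma b * Real.Gamma a / Real.Gamma (a + b)))
        = (t * (t ^ (a - 1) * t ^ (b - 1))) * (Real.Gamma b * Real.Gamma a / Real.Gamma (a + b)) := by ring
      _ = (Real.Gamma a * Real.Gamma b / Real.Gamma (a + b)) * t ^ (a + b - 1) := by
          rw [et]; ring

section matrixlemmas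
variable {n : Type*} [Fintype n] [DecidableEq n]

lemma entry_pow_le (B : Matrix n n ℝ) (k : ℕ) (i j : n) :
    |(B ^ k) i j| ≤ (∑ p, ∑ q, |B p q|) ^ k := by
  induction k generalizing i j with
  | zero =>
    simp [Matrix.one_apply]
    split <;> simp
  | succ k ih =>
    rw [pow_succ, Matrix.mul_apply]
    set c := ∑ p, ∑ q, |B p q| with hc
    have hc0 : 0 ≤ c := Finset.sum_nonneg fun p _ => Finset.sum_nonneg fun q _ => abs_nonneg _
    calc |∑ l, (B ^ k) i l * B l j| ≤ ∑ l, |(B ^ k) i l * B l j| := Finset.abs_sum_le_sum_abs _ _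
      _ ≤ ∑ l, c ^ k * |B l j| := by
          apply Finset.sum_le_sum
          intro l _
          rw [abs_mul]
          exact mul_le_mul_of_nonneg_right (ih i l) (abs_nonneg _) |>.trans_eq rfl
      _ = c ^ k * ∑ l, |B l j| := by rw [← Finset.mul_sum]
      _ ≤ c ^ k * c := by
          apply mul_le_mul_of_nonneg_left _ (by positivity)
          rw [hc]
          apply Finset.sum_le_sum
          intro p _
          exact Finset.single_le_sum (f := fun q => |B p q|) (fun q _ => abs_nonneg _)
            (Finset.mem_univ j)
      _ = c ^ (k + 1) := by rw [pow_succ]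

lemma mulVec_norm_le (B : Matrix n n ℝ) (w : n → ℝ) :
    ‖B.mulVec w‖ ≤ (∑ p, ∑ q, |B p q|) * ‖w‖ := by
  set c := ∑ p, ∑ q, |B p q| with hc
  have hc0 : 0 ≤ c := Finset.sum_nonneg fun p _ => Finset.sum_nonneg fun q _ => abs_nonneg _
  apply pi_norm_le_iff_of_nonneg (by positivity) |>.2
  intro i
  rw [Matrix.mulVec, dotProduct]
  calc ‖∑ j, B i j * w j‖ ≤ ∑ j, |B i j * w j| := Finset.abs_sum_le_sum_abs _ _
    _ ≤ ∑ j, |B i j| * ‖w‖ := by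
        apply Finset.sum_le_sum
        intro j _
        rw [abs_mul]
        exact mul_le_mul_of_nonneg_left (norm_le_pi_norm w j) (abs_nonneg _)
    _ = (∑ j, |B i j|) * ‖w‖ := by rw [Finset.sum_mul]
    _ ≤ c * ‖w‖ := by
        apply mul_le_mul_of_nonneg_right _ (norm_nonneg _)
        rw [hc]
        exact Finset.single_le_sum (f := fun p => ∑ q, |B p q|)
          (fun p _ => Finset.sum_nonneg fun q _ => abs_nonneg _) (Finset.mem_univ i)

lemma vk_norm_le (B : Matrix n n ℝ) (x₀ : n → ℝ) (k : ℕ) :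
    ‖(B ^ k).mulVec x₀‖ ≤ (∑ p, ∑ q, |B p q|) ^ k * ‖x₀‖ := by
  induction k with
  | zero => simp [Matrix.one_mulVec]
  | succ k ih =>
    set c := ∑ p, ∑ q, |B p q| with hc
    have hc0 : 0 ≤ c := Finset.sum_nonneg fun p _ => Finset.sum_nonneg fun q _ => abs_nonneg _
    have e : (B ^ (k+1)).mulVec x₀ = B.mulVec ((B ^ k).mulVec x₀) := by
      rw [pow_succ']
      rw [← Matrix.mulVec_mulVec]
    rw [e]
    calc ‖B.mulVec ((B ^ k).mulVec x₀)‖ ≤ c * ‖(B ^ k).mulVec x₀‖ := mulVec_norm_le B _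
      _ ≤ c * (c ^ k * ‖x₀‖) := mul_le_mul_of_nonneg_left ih hc0
      _ = c ^ (k+1) * ‖x₀‖ := by ring

lemma summable_matrix {B : Matrix n n ℝ} {c : ℕ → ℝ}
    (hc : Summable fun k => |c k| * (∑ p, ∑ q, |B p q|) ^ k) :
    Summable (fun k => c k • B ^ k) := by
  have key : ∀ i j : n, Summable (fun k => (c k • B ^ k) i j) := by
    intro i j
    apply Summable.of_abs
    apply Summable.of_nonneg_of_le (fun k => abs_nonneg _) _ hc
    intro k
    have : (c k • B ^ k) i j = c k * (B ^ k) i j := rfl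
    rw [this, abs_mul]
    exact mul_le_mul_of_nonneg_left (entry_pow_le B k i j) (abs_nonneg _)
  exact Pi.summable.2 fun i => Pi.summable.2 fun j => key i j

lemma tsum_mulVec (x₀ : n → ℝ) {M : ℕ → Matrix n n ℝ} (hM : Summable M) :
    (∑' k : ℕ, M k).mulVec x₀ = ∑' k : ℕ, (M k).mulVec x₀ := by
  let L : Matrix n n ℝ →ₗ[ℝ] (n → ℝ) :=
    { toFun := fun B => B.mulVec x₀
      map_add' := fun B C => Matrix.add_mulVec B C x₀
      map_smul' := fun r B => Matrix.smul_mulVec r B x₀ }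
  exact (LinearMap.toContinuousLinearMap L).map_tsum hM

lemma mulVec_tsum (B : Matrix n n ℝ) {v : ℕ → n → ℝ} (hv : Summable v) :
    B.mulVec (∑' k : ℕ, v k) = ∑' k : ℕ, B.mulVec (v k) := by
  let L : (n → ℝ) →ₗ[ℝ] (n → ℝ) := Matrix.mulVecLin B
  exact (LinearMap.toContinuousLinearMap L).map_tsum hv

end matrixlemmas

/-- The Mittag-Leffler matrix function `E_α(A) = ∑ A^k / Γ(αk+1)` of a real matrix. -/
noncomputable def mlMatR (α : ℝ) {n : Type*} [Fintype n] [DecidableEq n]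
    (A : Matrix n n ℝ) : Matrix n n ℝ :=
  ∑' k : ℕ, (Real.Gamma (α * k + 1))⁻¹ • A ^ k

set_option maxHeartbeats 1600000 in
theorem volterra_solution_unique {n : Type*} [Fintype n] [DecidableEq n] [Nonempty n]
    (α : ℝ) (hα0 : 0 < α) (hα1 : α < 1) (A : Matrix n n ℝ) (x₀ : n → ℝ)
    (x : ℝ → (n → ℝ)) (hcont : ContinuousOn x (Set.Ici (0:ℝ)))
    (hvolterra : ∀ t : ℝ, 0 ≤ t →
      x t = x₀ + (Real.Gamma α)⁻¹ •
        ∫ s in (0:ℝ)..t, ((t - s) ^ (α - 1)) • (A.mulVec (x s))) :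
    ∀ t : ℝ, 0 ≤ t → x t = (mlMatR α ((t ^ α) • A)).mulVec x₀ := by
  classical
  set cA : ℝ := ∑ p, ∑ q, |A p q| with hcA
  have hcA0 : 0 ≤ cA := Finset.sum_nonneg fun p _ => Finset.sum_nonneg fun q _ => abs_nonneg _
  set v : ℕ → n → ℝ := fun k => (A ^ k).mulVec x₀ with hvdef
  set y : ℝ → n → ℝ :=
    fun t => ∑' k : ℕ, (t ^ (α * k) / Real.Gamma (α * k + 1)) • v k with hydef
  have hΓα : 0 < Real.Gamma α := Real.Gamma_pos_of_pos hα0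
  have hΓk : ∀ k : ℕ, 0 < Real.Gamma (α * k + 1) :=
    fun k => Real.Gamma_pos_of_pos (by positivity)
  have hvknorm : ∀ k, ‖v k‖ ≤ cA ^ k * ‖x₀‖ := fun k => vk_norm_le A x₀ k
  have hrpow_pow : ∀ t : ℝ, 0 ≤ t → ∀ k : ℕ, t ^ (α * k) = (t ^ α) ^ k := by
    intro t ht k
    rw [← Real.rpow_natCast (t ^ α) k, ← Real.rpow_mul ht]
  have hsummand_norm : ∀ t : ℝ, 0 ≤ t → ∀ k : ℕ,
      ‖(t ^ (α * k) / Real.Gamma (α * k + 1)) • v k‖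
        ≤ ((t ^ α * cA) ^ k / Real.Gamma (α * k + 1)) * ‖x₀‖ := by
    intro t ht k
    rw [norm_smul, Real.norm_eq_abs,
      abs_of_nonneg (div_nonneg (Real.rpow_nonneg ht _) (hΓk k).le), hrpow_pow t ht k, mul_pow]
    calc (t ^ α) ^ k / Real.Gamma (α * k + 1) * ‖v k‖
        ≤ (t ^ α) ^ k / Real.Gamma (α * k + 1) * (cA ^ k * ‖x₀‖) := by
          apply mul_le_mul_of_nonneg_left (hvknorm k)
          exact div_nonneg (by positivity) (hΓk k).le
      _ = (t ^ α) ^ k * cA ^ k / Real.Gamma (α * k + 1) * ‖x₀‖ := by ring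
  have hu_sum : ∀ r : ℝ, 0 ≤ r →
      Summable (fun k : ℕ => (r ^ k / Real.Gamma (α * k + 1)) * ‖x₀‖) :=
    fun r hr => (ml_summable hα0 hr).mul_right _
  have hsummable : ∀ t : ℝ, 0 ≤ t →
      Summable (fun k : ℕ => (t ^ (α * k) / Real.Gamma (α * k + 1)) • v k) := by
    intro t ht
    apply Summable.of_norm
    exact Summable.of_nonneg_of_le (fun k => norm_nonneg _) (hsummand_norm t ht)
      (hu_sum (t ^ α * cA) (by positivity))
  have hy_cont : ∀ T : ℝ, 0 ≤ T → ContinuousOn y (Set.Icc 0 T) := by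
    intro T hT
    rw [hydef]
    apply continuousOn_tsum
      (u := fun k : ℕ => ((T ^ α * cA) ^ k / Real.Gamma (α * k + 1)) * ‖x₀‖)
    · intro k
      apply ContinuousOn.fun_smul _ continuousOn_const
      apply ContinuousOn.div_const
      intro t _
      exact (Real.continuousAt_rpow_const t (α * k) (Or.inr (by positivity))).continuousWithinAt
    · exact hu_sum _ (by positivity)
    · intro k t htT
      refine (hsummand_norm t htT.1 k).trans ?_
      have h1 : (t ^ α * cA) ^ k ≤ (T ^ α * cA) ^ k := by
        apply pow_le_pow_left₀ (mul_nonneg (Real.rpow_nonneg htT.1 _) hcA0)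
        exact mul_le_mul_of_nonneg_right (Real.rpow_le_rpow htT.1 htT.2 hα0.le) hcA0
      apply mul_le_mul_of_nonneg_right _ (norm_nonneg _)
      exact (div_le_div_iff_of_pos_right (hΓk k)).2 h1
  -- E1 : the Mittag-Leffler matrix applied to x₀ agrees with y
  have hE1 : ∀ t : ℝ, 0 ≤ t → (mlMatR α ((t ^ α) • A)).mulVec x₀ = y t := by
    intro t ht
    have hB : ∑ p, ∑ q, |((t ^ α) • A) p q| = t ^ α * cA := by
      rw [hcA, Finset.mul_sum]
      apply Finset.sum_congr rfl
      intro p _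
      rw [Finset.mul_sum]
      apply Finset.sum_congr rfl
      intro q _
      have : ((t ^ α) • A) p q = t ^ α * A p q := rfl
      rw [this, abs_mul, abs_of_nonneg (Real.rpow_nonneg ht α)]
    have hMsum : Summable (fun k : ℕ => (Real.Gamma (α * k + 1))⁻¹ • ((t ^ α) • A) ^ k) := by
      apply summable_matrix
      rw [hB]
      apply Summable.congr (ml_summable hα0 (r := t ^ α * cA) (by positivity))
      intro k
      rw [abs_of_nonneg (inv_nonneg.2 (hΓk k).le)]
      rw [div_eq_mul_inv, mul_comm]
    rw [mlMatR, tsum_mulVec x₀ hMsum, hydef]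
    apply tsum_congr
    intro k
    rw [Matrix.smul_mulVec, smul_pow, Matrix.smul_mulVec, smul_smul]
    congr 1
    rw [hrpow_pow t ht k, div_eq_mul_inv, mul_comm]
  -- integrability of the kernel against a continuous vector function
  have hKint : ∀ t : ℝ, 0 ≤ t → ∀ w : ℝ → n → ℝ, ContinuousOn w (Set.Icc 0 t) →
      IntervalIntegrable (fun s => ((t - s) ^ (α - 1)) • A.mulVec (w s))
        MeasureTheory.volume 0 t := by
    intro t ht w hw
    have hAw : ContinuousOn (fun s => A.mulVec (w s)) (Set.Icc 0 t) := by
      have hL : Continuous (fun u : n → ℝ => A.mulVec u) :=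
        (Matrix.mulVecLin A).continuous_of_finiteDimensional
      exact hL.comp_continuousOn hw
    obtain ⟨M, hM⟩ := isCompact_Icc.exists_bound_of_continuousOn hAw
    have hker : IntervalIntegrable (fun s : ℝ => (t - s) ^ (α - 1))
        MeasureTheory.volume 0 t := by
      have h2 := (intervalIntegrable_rpow' (a := 0) (b := t)
        (show (-1:ℝ) < α - 1 by linarith)).comp_sub_left t
      simpa using h2.symm
    constructor
    · apply MeasureTheory.Integrable.mono' (g := fun s => (t - s) ^ (α - 1) * M)
      · exact (hker.mul_const M).1
      · apply MeasureTheory.AEStronglyMeasurable.fun_smul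
        · exact Measurable.aestronglyMeasurable (by fun_prop)
        · exact ((hAw.mono Set.Ioc_subset_Icc_self).aestronglyMeasurable measurableSet_Ioc)
      · rw [MeasureTheory.ae_restrict_iff' measurableSet_Ioc]
        filter_upwards with s hs
        rw [norm_smul, Real.norm_eq_abs,
          abs_of_nonneg (Real.rpow_nonneg (by linarith [hs.2] : (0:ℝ) ≤ t - s) _)]
        exact mul_le_mul_of_nonneg_left (hM s (Set.Ioc_subset_Icc_self hs))
          (Real.rpow_nonneg (by linarith [hs.2]) _)
    · have : Set.Ioc t 0 = (∅ : Set ℝ) := Set.Ioc_eq_empty (by simpa using ht)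
      rw [MeasureTheory.IntegrableOn, this]
      simp
  -- the key Beta integral identity
  have hbeta : ∀ t : ℝ, 0 ≤ t → ∀ k : ℕ,
      (∫ s in (0:ℝ)..t, (t - s) ^ (α - 1) * s ^ (α * k)) =
        Real.Gamma α * Real.Gamma (α * k + 1) / Real.Gamma (α * ((k : ℝ) + 1) + 1)
          * t ^ (α * ((k : ℝ) + 1)) := by
    intro t ht k
    have h := beta_conv (a := α) (b := α * k + 1) hα0
      (le_add_of_nonneg_left (by positivity)) ht
    have e0 : α * (k : ℝ) + 1 - 1 = α * k := by ring
    have e1 : α + (α * (k : ℝ) + 1) - 1 = α * ((k : ℝ) + 1) := by ring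
    have e2 : α + (α * (k : ℝ) + 1) = α * ((k : ℝ) + 1) + 1 := by ring
    rw [e0, e1, e2] at h
    exact h
  -- E2 : y solves the Volterra equation
  have hE2 : ∀ t : ℝ, 0 ≤ t → y t = x₀ + (Real.Gamma α)⁻¹ •
      ∫ s in (0:ℝ)..t, ((t - s) ^ (α - 1)) • (A.mulVec (y s)) := by
    intro t ht
    set μ := MeasureTheory.volume.restrict (Set.Ioc (0:ℝ) t) with hμ
    set f : ℕ → ℝ → n → ℝ := fun k s =>
      (((t - s) ^ (α - 1) * s ^ (α * k)) * (Real.Gamma (α * k + 1))⁻¹) • v (k + 1) with hfdef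
    have hker : ∀ k : ℕ, IntervalIntegrable (fun s => (t - s) ^ (α - 1) * s ^ (α * k))
        MeasureTheory.volume 0 t := fun k => integrable_kernel hα0 (by positivity) ht
    have hfint : ∀ k, MeasureTheory.Integrable (f k) μ :=
      fun k => (((hker k).1).mul_const _).smul_const _
    have hpt : ∀ s : ℝ, 0 ≤ s →
        ((t - s) ^ (α - 1)) • A.mulVec (y s) = ∑' k : ℕ, f k s := by
      intro s hs
      have h1 : A.mulVec (y s) =
          ∑' k : ℕ, (s ^ (α * k) / Real.Gamma (α * k + 1)) • v (k + 1) := by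
        rw [hydef]
        simp only
        rw [mulVec_tsum A (hsummable s hs)]
        apply tsum_congr
        intro k
        rw [Matrix.mulVec_smul]
        congr 1
        show A.mulVec ((A ^ k).mulVec x₀) = (A ^ (k + 1)).mulVec x₀
        rw [Matrix.mulVec_mulVec, ← pow_succ']
      have hsum2 : Summable (fun k : ℕ =>
          (s ^ (α * k) / Real.Gamma (α * k + 1)) • v (k + 1)) := by
        apply Summable.of_norm
        apply Summable.of_nonneg_of_le (fun k => norm_nonneg _)
          (f := fun k : ℕ => ((s ^ α * cA) ^ k / Real.Gamma (α * k + 1)) * (cA * ‖x₀‖))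
        · intro k
          rw [norm_smul, Real.norm_eq_abs,
            abs_of_nonneg (div_nonneg (Real.rpow_nonneg hs _) (hΓk k).le),
            hrpow_pow s hs k, mul_pow]
          have h2 : ‖v (k + 1)‖ ≤ cA ^ k * (cA * ‖x₀‖) := by
            refine (hvknorm (k + 1)).trans_eq ?_
            ring
          calc (s ^ α) ^ k / Real.Gamma (α * k + 1) * ‖v (k + 1)‖
              ≤ (s ^ α) ^ k / Real.Gamma (α * k + 1) * (cA ^ k * (cA * ‖x₀‖)) := by
                apply mul_le_mul_of_nonneg_left h2
                exact div_nonneg (by positivity) (hΓk k).le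
            _ = (s ^ α) ^ k * cA ^ k / Real.Gamma (α * k + 1) * (cA * ‖x₀‖) := by ring
        · exact ((ml_summable hα0 (r := s ^ α * cA) (by positivity)).mul_right _)
      rw [h1, ← Summable.tsum_const_smul _ hsum2]
      apply tsum_congr
      intro k
      rw [smul_smul, hfdef]
      congr 1
      rw [div_eq_mul_inv]
      ring
    have hgint : ∀ k : ℕ,
        (∫ s, ((t - s) ^ (α - 1) * s ^ (α * k)) * (Real.Gamma (α * k + 1))⁻¹ ∂μ) =
          Real.Gamma α * t ^ (α * ((k : ℝ) + 1)) / Real.Gamma (α * ((k : ℝ) + 1) + 1) := by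
      intro k
      rw [MeasureTheory.integral_mul_const, hμ,
        ← intervalIntegral.integral_of_le ht, hbeta t ht k]
      field_simp
    have hval : ∀ k : ℕ, (∫ s, f k s ∂μ) =
        (Real.Gamma α * t ^ (α * ((k : ℝ) + 1)) / Real.Gamma (α * ((k : ℝ) + 1) + 1))
          • v (k + 1) := by
      intro k
      rw [hfdef]
      simp only
      rw [_root_.integral_smul_const, hgint k]
    have hnormval : ∀ k : ℕ, (∫ s, ‖f k s‖ ∂μ) =
        (Real.Gamma α * t ^ (α * ((k : ℝ) + 1)) / Real.Gamma (α * ((k : ℝ) + 1) + 1))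
          * ‖v (k + 1)‖ := by
      intro k
      have hcong : ∀ s ∈ Set.Ioc (0:ℝ) t, ‖f k s‖ =
          (((t - s) ^ (α - 1) * s ^ (α * k)) * (Real.Gamma (α * k + 1))⁻¹) * ‖v (k + 1)‖ := by
        intro s hs
        rw [hfdef]
        simp only
        rw [norm_smul, Real.norm_eq_abs, abs_of_nonneg]
        have h1 : (0:ℝ) ≤ t - s := by linarith [hs.2]
        have h2 : (0:ℝ) ≤ s := hs.1.le
        positivity
      rw [hμ, MeasureTheory.setIntegral_congr_fun measurableSet_Ioc hcong]
      rw [MeasureTheory.integral_mul_const, ← hμ, hgint k]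
    have hnormsum : Summable (fun k => ∫ s, ‖f k s‖ ∂μ) := by
      apply Summable.congr _ (fun k => (hnormval k).symm)
      apply Summable.of_nonneg_of_le
        (fun k => by
          apply mul_nonneg _ (norm_nonneg _)
          apply div_nonneg (mul_nonneg hΓα.le (Real.rpow_nonneg ht _))
          exact (Real.Gamma_pos_of_pos (by positivity)).le)
        (f := fun k : ℕ => Real.Gamma α *
          ((( t ^ α * cA) ^ (k+1) / Real.Gamma (α * ((k:ℝ) + 1) + 1)) * ‖x₀‖))
      · intro k
        have hΓs : 0 < Real.Gamma (α * ((k:ℝ) + 1) + 1) := Real.Gamma_pos_of_pos (by positivity)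
        have e : t ^ (α * ((k:ℝ) + 1)) = (t ^ α) ^ (k + 1) := by
          have := hrpow_pow t ht (k + 1)
          rwa [Nat.cast_add, Nat.cast_one] at this
        rw [e]
        have h2 : ‖v (k + 1)‖ ≤ cA ^ (k + 1) * ‖x₀‖ := hvknorm (k + 1)
        calc Real.Gamma α * (t ^ α) ^ (k+1) / Real.Gamma (α * ((k:ℝ) + 1) + 1) * ‖v (k+1)‖
            ≤ Real.Gamma α * (t ^ α) ^ (k+1) / Real.Gamma (α * ((k:ℝ) + 1) + 1)
              * (cA ^ (k+1) * ‖x₀‖) := by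
              apply mul_le_mul_of_nonneg_left h2
              apply div_nonneg (by positivity) hΓs.le
          _ = Real.Gamma α * (((t ^ α) ^ (k+1) * cA ^ (k+1) / Real.Gamma (α * ((k:ℝ)+1) + 1))
              * ‖x₀‖) := by ring
          _ = Real.Gamma α * (((t ^ α * cA) ^ (k+1) / Real.Gamma (α * ((k:ℝ)+1) + 1)) * ‖x₀‖) := by
              rw [mul_pow]
      · apply Summable.mul_left
        have hs := (hu_sum (t ^ α * cA) (by positivity))
        have := (summable_nat_add_iff 1).2 hs
        apply this.congr
        intro k
        push_cast
        rfl
    have hmain : (∫ s in (0:ℝ)..t, ((t - s) ^ (α - 1)) • A.mulVec (y s)) =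
        ∑' k : ℕ, ∫ s, f k s ∂μ := by
      rw [intervalIntegral.integral_of_le ht]
      have hcong : ∀ s ∈ Set.Ioc (0:ℝ) t,
          ((t - s) ^ (α - 1)) • A.mulVec (y s) = ∑' k : ℕ, f k s :=
        fun s hs => hpt s hs.1.le
      rw [MeasureTheory.setIntegral_congr_fun measurableSet_Ioc hcong]
      rw [← MeasureTheory.integral_tsum_of_summable_integral_norm hfint hnormsum]
    -- assemble
    have hshift : Summable (fun k : ℕ =>
        (t ^ (α * ((k:ℕ)+1 : ℕ)) / Real.Gamma (α * ((k:ℕ)+1 : ℕ) + 1)) • v (k + 1)) :=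
      (summable_nat_add_iff 1).2 (hsummable t ht)
    have htail : (Real.Gamma α)⁻¹ • (∑' k : ℕ, ∫ s, f k s ∂μ) =
        ∑' k : ℕ, (t ^ (α * ((k:ℕ)+1 : ℕ)) / Real.Gamma (α * ((k:ℕ)+1 : ℕ) + 1)) • v (k + 1) := by
      have h1 : (∑' k : ℕ, ∫ s, f k s ∂μ) = ∑' k : ℕ, Real.Gamma α •
          ((t ^ (α * ((k:ℕ)+1 : ℕ)) / Real.Gamma (α * ((k:ℕ)+1 : ℕ) + 1)) • v (k + 1)) := by
        apply tsum_congr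
        intro k
        rw [hval k, smul_smul]
        congr 2 <;> push_cast <;> ring
      rw [h1, Summable.tsum_const_smul _ hshift, smul_smul, inv_mul_cancel₀ hΓα.ne', one_smul]
    rw [hmain, htail]
    have hzeroadd := Summable.tsum_eq_zero_add (hsummable t ht)
    rw [hydef]
    simp only
    rw [hzeroadd]
    congr 1
    simp [Real.Gamma_one, hvdef, Matrix.one_mulVec]
  -- uniqueness
  intro T hT
  set z : ℝ → n → ℝ := fun s => x s - y s with hzdef
  have hIccIci : Set.Icc (0:ℝ) T ⊆ Set.Ici 0 := fun s hs => hs.1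
  have hzc : ContinuousOn z (Set.Icc 0 T) := (hcont.mono hIccIci).sub (hy_cont T hT)
  obtain ⟨M, hM⟩ := isCompact_Icc.exists_bound_of_continuousOn hzc
  have hzeq : ∀ t ∈ Set.Icc (0:ℝ) T, z t = (Real.Gamma α)⁻¹ •
      ∫ s in (0:ℝ)..t, ((t - s) ^ (α - 1)) • A.mulVec (z s) := by
    intro t htT
    have ht0 : 0 ≤ t := htT.1
    have hsubt : Set.Icc (0:ℝ) t ⊆ Set.Ici 0 := fun s hs => hs.1
    have hxi := hKint t ht0 x (hcont.mono hsubt)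
    have hyi := hKint t ht0 y (hy_cont t ht0)
    show x t - y t = _
    rw [hvolterra t ht0, hE2 t ht0, add_sub_add_left_eq_sub, ← smul_sub,
      ← intervalIntegral.integral_sub hxi hyi]
    congr 1
    apply intervalIntegral.integral_congr
    intro s _
    show (t - s) ^ (α - 1) • A.mulVec (x s) - (t - s) ^ (α - 1) • A.mulVec (y s) = _
    rw [← smul_sub, ← Matrix.mulVec_sub, hzdef]
  have hind : ∀ k : ℕ, ∀ t ∈ Set.Icc (0:ℝ) T,
      ‖z t‖ ≤ M * cA ^ k * t ^ (α * k) / Real.Gamma (α * k + 1) := by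
    intro k
    induction k with
    | zero =>
      intro t htT
      simpa [Real.Gamma_one] using hM t htT
    | succ k ih =>
      intro t htT
      have ht0 : 0 ≤ t := htT.1
      set D : ℝ := cA * (M * cA ^ k / Real.Gamma (α * k + 1)) with hD
      have hzint := hKint t ht0 z (hzc.mono (Set.Icc_subset_Icc le_rfl htT.2))
      have hRint : IntervalIntegrable (fun s => ((t - s) ^ (α - 1) * s ^ (α * k)) * D)
          MeasureTheory.volume 0 t :=
        (integrable_kernel hα0 (by positivity) ht0).mul_const D
      have hM0 : 0 ≤ M := le_trans (norm_nonneg _) (hM 0 ⟨le_refl 0, hT⟩)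
      have hD0 : 0 ≤ D := by
        rw [hD]
        apply mul_nonneg hcA0
        apply div_nonneg (by positivity) (hΓk k).le
      have hbnd : ∀ s ∈ Set.Icc (0:ℝ) t,
          ‖((t - s) ^ (α - 1)) • A.mulVec (z s)‖ ≤ ((t - s) ^ (α - 1) * s ^ (α * k)) * D := by
        intro s hs
        have hts : (0:ℝ) ≤ t - s := by linarith [hs.2]
        rw [norm_smul, Real.norm_eq_abs, abs_of_nonneg (Real.rpow_nonneg hts _)]
        have h1 : ‖A.mulVec (z s)‖ ≤ cA * ‖z s‖ := mulVec_norm_le A (z s)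
        have h2 : ‖z s‖ ≤ M * cA ^ k * s ^ (α * k) / Real.Gamma (α * k + 1) :=
          ih s ⟨hs.1, le_trans hs.2 htT.2⟩
        have h3 : ‖A.mulVec (z s)‖ ≤ s ^ (α * k) * D := by
          refine h1.trans ?_
          refine (mul_le_mul_of_nonneg_left h2 hcA0).trans_eq ?_
          rw [hD]
          ring
        calc (t - s) ^ (α - 1) * ‖A.mulVec (z s)‖
            ≤ (t - s) ^ (α - 1) * (s ^ (α * k) * D) :=
              mul_le_mul_of_nonneg_left h3 (Real.rpow_nonneg hts _)
          _ = ((t - s) ^ (α - 1) * s ^ (α * k)) * D := by ring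
      have hcore : ‖∫ s in (0:ℝ)..t, ((t - s) ^ (α - 1)) • A.mulVec (z s)‖ ≤
          (Real.Gamma α * Real.Gamma (α * k + 1) / Real.Gamma (α * ((k:ℝ) + 1) + 1)
            * t ^ (α * ((k:ℝ) + 1))) * D := by
        calc ‖∫ s in (0:ℝ)..t, ((t - s) ^ (α - 1)) • A.mulVec (z s)‖
            ≤ ∫ s in (0:ℝ)..t, ‖((t - s) ^ (α - 1)) • A.mulVec (z s)‖ :=
              intervalIntegral.norm_integral_le_integral_norm ht0
          _ ≤ ∫ s in (0:ℝ)..t, ((t - s) ^ (α - 1) * s ^ (α * k)) * D :=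
              intervalIntegral.integral_mono_on ht0 hzint.norm hRint hbnd
          _ = (Real.Gamma α * Real.Gamma (α * k + 1) / Real.Gamma (α * ((k:ℝ) + 1) + 1)
              * t ^ (α * ((k:ℝ) + 1))) * D := by
              rw [intervalIntegral.integral_mul_const, hbeta t ht0 k]
      have hΓs : 0 < Real.Gamma (α * ((k:ℝ) + 1) + 1) := Real.Gamma_pos_of_pos (by positivity)
      calc ‖z t‖ = ‖(Real.Gamma α)⁻¹ •
            ∫ s in (0:ℝ)..t, ((t - s) ^ (α - 1)) • A.mulVec (z s)‖ := by rw [hzeq t htT]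
        _ = (Real.Gamma α)⁻¹ *
            ‖∫ s in (0:ℝ)..t, ((t - s) ^ (α - 1)) • A.mulVec (z s)‖ := by
            rw [norm_smul, Real.norm_eq_abs, abs_of_nonneg (inv_nonneg.2 hΓα.le)]
        _ ≤ (Real.Gamma α)⁻¹ * ((Real.Gamma α * Real.Gamma (α * k + 1)
              / Real.Gamma (α * ((k:ℝ) + 1) + 1) * t ^ (α * ((k:ℝ) + 1))) * D) :=
            mul_le_mul_of_nonneg_left hcore (inv_nonneg.2 hΓα.le)
        _ = M * cA ^ (k + 1) * t ^ (α * ((k:ℝ) + 1)) / Real.Gamma (α * ((k:ℝ) + 1) + 1) := by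
            rw [hD]
            field_simp
            ring
        _ = M * cA ^ (k + 1) * t ^ (α * ((k:ℕ)+1 : ℕ)) / Real.Gamma (α * ((k:ℕ)+1 : ℕ) + 1) := by
            push_cast
            ring_nf
  have hTmem : T ∈ Set.Icc (0:ℝ) T := ⟨hT, le_refl T⟩
  have hzT : z T = 0 := by
    have hM0 : 0 ≤ M := le_trans (norm_nonneg _) (hM 0 ⟨le_refl 0, hT⟩)
    have hle : ∀ k : ℕ, ‖z T‖ ≤ M * ((cA * T ^ α) ^ k / Real.Gamma (α * k + 1)) := by
      intro k
      refine (hind k T hTmem).trans_eq ?_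
      rw [hrpow_pow T hT k, mul_pow]
      ring
    have hten : Filter.Tendsto (fun k : ℕ => M * ((cA * T ^ α) ^ k / Real.Gamma (α * k + 1)))
        Filter.atTop (nhds 0) := by
      have := (ml_summable hα0 (r := cA * T ^ α) (by positivity)).tendsto_atTop_zero
      simpa using this.const_mul M
    have h0 : ‖z T‖ ≤ 0 := ge_of_tendsto' hten hle
    have := le_antisymm h0 (norm_nonneg _)
    exact norm_eq_zero.1 this
  have hxy : x T = y T := by
    have h : x T - y T = 0 := hzT
    have := sub_eq_zero.1 h
    exact this
  rw [hE1 T hT, ← hxy]
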